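/- arXiv:2007.12592 — 6 statements merged into one kernel-verified Lean document; each statement's English description precedes it below -/
import Mathlib

section
/- Let L be the free ℤ-module ℤ²² equipped with the even symmetric bilinear form ⟨·,·⟩ given by the orthogonal block decomposition H ⊕ H ⊕ H ⊕ (−E₈) ⊕ (−E₈) described in the context (a model of the K3 lattice). Fix an integer k with 0 ≤ k ≤ 9 and even integers B and A. Then there exist elements κ̂, β, d₁, …, d_k of L such that ⟨κ̂, κ̂⟩ = B, ⟨β, β⟩ = A, ⟨κ̂, β⟩ = 0, ⟨κ̂, d_i⟩ = 1 and ⟨β, d_i⟩ = 0 for all i, and ⟨d_i, d_j⟩ = −2δ_{ij} for all i, j; moreover, κ̂, β, d₁, …, d_k generate a primitive sublattice of L, i.e., every x ∈ L whose image in L ⊗_ℤ ℝ is a real linear combination of κ̂, β, d₁, …, d_k is an integral linear combination of them. -/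
/-- The `(-E₈)` Gram matrix on indices `0, …, 7` (0-indexed version of the
basis `y₁, …, y₈` in the paper): `⟨y_j, y_j⟩ = -2`, `⟨y_j, y_k⟩ = 1` if
`{j, k}` is one of `{1,2}, …, {6,7}, {5,8}` (1-indexed), and `0` otherwise. -/
def negE8Gram (a b : ℕ) : ℤ :=
  if a = b then -2
  else if (b = a + 1 ∧ b ≤ 6) ∨ (a = b + 1 ∧ a ≤ 6) ∨ (a = 4 ∧ b = 7) ∨ (a = 7 ∧ b = 4)
    then 1
  else 0

/-- The Gram matrix of the K3 lattice `L = H ⊕ H ⊕ H ⊕ (−E₈) ⊕ (−E₈)` on the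
basis `x_{1,1}, x_{1,2}, x_{2,1}, x_{2,2}, x_{3,1}, x_{3,2}, y_{1,1}, …, y_{1,8},
y_{2,1}, …, y_{2,8}` (indices `0, …, 21`): each hyperbolic block `{2i, 2i+1}`
(for `i = 0, 1, 2`) has `⟨x, x⟩ = 0` on the diagonal and `⟨x_{i,1}, x_{i,2}⟩ = 1`;
indices `6, …, 13` and `14, …, 21` each carry a copy of `−E₈`; distinct blocks
are orthogonal. -/
def K3Gram (a b : ℕ) : ℤ :=
  if a < 6 ∧ b < 6 then (if a / 2 = b / 2 ∧ a ≠ b then 1 else 0)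
  else if 6 ≤ a ∧ a < 14 ∧ 6 ≤ b ∧ b < 14 then negE8Gram (a - 6) (b - 6)
  else if 14 ≤ a ∧ a < 22 ∧ 14 ≤ b ∧ b < 22 then negE8Gram (a - 14) (b - 14)
  else 0

/-- The symmetric bilinear form of the K3 lattice on `ℤ²²`. -/
def K3Form (x y : Fin 22 → ℤ) : ℤ :=
  ∑ i : Fin 22, ∑ j : Fin 22, x i * K3Gram i j * y j

open Fin.NatCast in
lemma K3Form_range (x y : Fin 22 → ℤ) :
    K3Form x y = ∑ i ∈ Finset.range 22, ∑ j ∈ Finset.range 22, x i * K3Gram i j * y j := by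
  rw [K3Form,
    ← Fin.sum_univ_eq_sum_range (fun i : ℕ => ∑ j ∈ Finset.range 22, x i * K3Gram i j * y j) 22]
  refine Finset.sum_congr rfl fun i _ => ?_
  rw [← Fin.sum_univ_eq_sum_range (fun j : ℕ => x ↑(i.val) * K3Gram i.val j * y ↑j) 22]
  refine Finset.sum_congr rfl fun j _ => ?_
  rw [Fin.cast_val_eq_self, Fin.cast_val_eq_self]

set_option maxHeartbeats 4000000 in
lemma K3Form_eval (x y : Fin 22 → ℤ) : K3Form x y =
    (x 0 * y 1 + x 1 * y 0) + (x 2 * y 3 + x 3 * y 2) + (x 4 * y 5 + x 5 * y 4)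
    + (-2*(x 6*y 6 + x 7*y 7 + x 8*y 8 + x 9*y 9 + x 10*y 10 + x 11*y 11 + x 12*y 12 + x 13*y 13)
       + (x 6*y 7 + x 7*y 6) + (x 7*y 8 + x 8*y 7) + (x 8*y 9 + x 9*y 8) + (x 9*y 10 + x 10*y 9)
       + (x 10*y 11 + x 11*y 10) + (x 11*y 12 + x 12*y 11) + (x 10*y 13 + x 13*y 10))
    + (-2*(x 14*y 14 + x 15*y 15 + x 16*y 16 + x 17*y 17 + x 18*y 18 + x 19*y 19 + x 20*y 20 + x 21*y 21)
       + (x 14*y 15 + x 15*y 14) + (x 15*y 16 + x 16*y 15) + (x 16*y 17 + x 17*y 16) + (x 17*y 18 + x 18*y 17)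
       + (x 18*y 19 + x 19*y 18) + (x 19*y 20 + x 20*y 19) + (x 18*y 21 + x 21*y 18)) := by
  rw [K3Form_range]
  simp only [Finset.sum_range_succ, Finset.sum_range_zero]
  norm_num [K3Gram, negE8Gram]
  simp only [show (@Nat.cast (Fin 22) (Fin.NatCast.instNatCast 22) 1) = 1 from rfl]
  ring

/-- `d_m = f₁ + v_m` where `v_0,…,v_3 = y_{1,1}, y_{1,3}, y_{1,5}, y_{1,7}`,
`v_4,…,v_7 = y_{2,1}, y_{2,3}, y_{2,5}, y_{2,7}`, `v_8 = e₃ - f₃`. -/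
def Dvec : Fin 9 → Fin 22 → ℤ :=
![![0,1,0,0,0,0, 1,0,0,0,0,0,0,0, 0,0,0,0,0,0,0,0],
  ![0,1,0,0,0,0, 0,0,1,0,0,0,0,0, 0,0,0,0,0,0,0,0],
  ![0,1,0,0,0,0, 0,0,0,0,1,0,0,0, 0,0,0,0,0,0,0,0],
  ![0,1,0,0,0,0, 0,0,0,0,0,0,1,0, 0,0,0,0,0,0,0,0],
  ![0,1,0,0,0,0, 0,0,0,0,0,0,0,0, 1,0,0,0,0,0,0,0],
  ![0,1,0,0,0,0, 0,0,0,0,0,0,0,0, 0,0,1,0,0,0,0,0],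
  ![0,1,0,0,0,0, 0,0,0,0,0,0,0,0, 0,0,0,0,1,0,0,0],
  ![0,1,0,0,0,0, 0,0,0,0,0,0,0,0, 0,0,0,0,0,0,1,0],
  ![0,1,0,0,1,-1,0,0,0,0,0,0,0,0, 0,0,0,0,0,0,0,0]]

/-- Index where `d_m` has its "private" coordinate. -/
def Jidx : Fin 9 → Fin 22 := ![6,8,10,12,14,16,18,20,4]

def kapV (p : ℤ) : Fin 22 → ℤ := fun n => if n = 0 then 1 else if n = 1 then p else 0
def betV (q : ℤ) : Fin 22 → ℤ := fun n => if n = 2 then 1 else if n = 3 then q else 0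

lemma Dvec_DD (m m' : Fin 9) : K3Form (Dvec m) (Dvec m') = if m = m' then -2 else 0 := by
  rw [K3Form_eval]; revert m m'; decide

lemma Dvec_at0 : ∀ m : Fin 9, Dvec m 0 = 0 := by decide
lemma Dvec_at1 : ∀ m : Fin 9, Dvec m 1 = 1 := by decide
lemma Dvec_at2 : ∀ m : Fin 9, Dvec m 2 = 0 := by decide
lemma Dvec_at3 : ∀ m : Fin 9, Dvec m 3 = 0 := by decide
lemma Dvec_atJ : ∀ m m' : Fin 9, Dvec m (Jidx m') = if m = m' then 1 else 0 := by decide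
lemma Jidx_ne : ∀ m : Fin 9, Jidx m ≠ 0 ∧ Jidx m ≠ 1 ∧ Jidx m ≠ 2 ∧ Jidx m ≠ 3 := by decide

/-- Fix `0 ≤ k ≤ 9` and even integers `B`, `A`.  There exist `κ̂`, `β`,
`d₁, …, d_k` in the K3 lattice `L = ℤ²²` with `⟨κ̂,κ̂⟩ = B`, `⟨β,β⟩ = A`,
`⟨κ̂,β⟩ = 0`, `⟨κ̂,dᵢ⟩ = 1`, `⟨β,dᵢ⟩ = 0`, `⟨dᵢ,dⱼ⟩ = -2δᵢⱼ`; moreover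
`κ̂, β, d₁, …, d_k` generate a primitive sublattice: every `x ∈ L` whose image
in `L ⊗ ℝ` is a real linear combination of them is an integral linear
combination of them. -/
theorem stmt_0 (k : ℕ) (hk : k ≤ 9) (B A : ℤ) (hB : Even B) (hA : Even A) :
    ∃ (κ β : Fin 22 → ℤ) (d : Fin k → Fin 22 → ℤ),
      K3Form κ κ = B ∧ K3Form β β = A ∧ K3Form κ β = 0 ∧
      (∀ i, K3Form κ (d i) = 1) ∧ (∀ i, K3Form β (d i) = 0) ∧
      (∀ i j, K3Form (d i) (d j) = if i = j then -2 else 0) ∧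
      (∀ (x : Fin 22 → ℤ) (a c : ℝ) (t : Fin k → ℝ),
        (fun n => (x n : ℝ)) =
            a • (fun n => (κ n : ℝ)) + c • (fun n => (β n : ℝ)) +
              ∑ i, t i • (fun n => (d i n : ℝ)) →
        ∃ (a' c' : ℤ) (t' : Fin k → ℤ),
          x = a' • κ + c' • β + ∑ i, t' i • d i) := by
  obtain ⟨p, hp⟩ := hB
  obtain ⟨q, hq⟩ := hA
  refine ⟨kapV p, betV q, fun i => Dvec (Fin.castLE hk i), ?_, ?_, ?_, ?_, ?_, ?_, ?_⟩
  · rw [K3Form_eval]; simp [kapV]; linarith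
  · rw [K3Form_eval]; simp [betV]; linarith
  · rw [K3Form_eval]; simp [kapV, betV]
  · intro i; rw [K3Form_eval]; simp [kapV, Dvec_at0, Dvec_at1]
  · intro i; rw [K3Form_eval]; simp [betV, Dvec_at2, Dvec_at3]
  · intro i j
    rw [Dvec_DD]
    simp [Fin.castLE_inj]
  · intro x a c t h
    have hn : ∀ n, (x n : ℝ) = a * (kapV p n : ℝ) + c * (betV q n : ℝ) +
        ∑ i, t i * (Dvec (Fin.castLE hk i) n : ℝ) := by
      intro n
      have := congrFun h n
      simpa [Finset.sum_apply] using this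
    have ha : ((x 0 : ℤ) : ℝ) = a := by
      have h0 := hn 0
      simpa [kapV, betV, Dvec_at0] using h0
    have hc : ((x 2 : ℤ) : ℝ) = c := by
      have h2 := hn 2
      simpa [kapV, betV, Dvec_at2] using h2
    have ht : ∀ i : Fin k, ((x (Jidx (Fin.castLE hk i)) : ℤ) : ℝ) = t i := by
      intro i
      have hJ := hn (Jidx (Fin.castLE hk i))
      have hne := Jidx_ne (Fin.castLE hk i)
      simp only [kapV, betV, Dvec_atJ, if_neg hne.1, if_neg hne.2.1, if_neg hne.2.2.1,
        if_neg hne.2.2.2] at hJ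
      simpa [Fin.castLE_inj, mul_ite, Finset.sum_ite_eq'] using hJ
    refine ⟨x 0, x 2, fun i => x (Jidx (Fin.castLE hk i)), ?_⟩
    funext n
    have hxn := hn n
    rw [← ha, ← hc] at hxn
    simp only [← ht] at hxn
    have hgoal : ((x n : ℤ) : ℝ) =
        ((x 0 * kapV p n + x 2 * betV q n +
          ∑ i, x (Jidx (Fin.castLE hk i)) * Dvec (Fin.castLE hk i) n : ℤ) : ℝ) := by
      push_cast
      simpa using hxn
    have := Int.cast_injective (α := ℝ) hgoal
    simpa [Finset.sum_apply] using this
end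

section
/- Let L be a free ℤ-module of finite rank with a ℤ-bilinear form b. Let u, v ∈ L and suppose: (i) u is primitive, i.e., for every x ∈ L and a ∈ ℝ with x ⊗ 1 = a·(u ⊗ 1) in L ⊗_ℤ ℝ one has a ∈ ℤ; and (ii) there exists e ∈ L with b(u, e) = 0 and b(v, e) ∈ {1, −1}. Then u and v generate a primitive sublattice of L: for every x ∈ L and all a, c ∈ ℝ with x ⊗ 1 = a·(u ⊗ 1) + c·(v ⊗ 1) in L ⊗_ℤ ℝ, both a and c are integers and x = a·u + c·v in L. -/
open scoped TensorProduct

lemma tmul_int_smul {L : Type*} [AddCommGroup L] [Module ℤ L] (k : ℤ) (y : L) :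
    ((1 : ℝ) ⊗ₜ[ℤ] (k • y) : ℝ ⊗[ℤ] L) = (k : ℝ) • ((1 : ℝ) ⊗ₜ[ℤ] y) := by
  have h1 : ((1 : ℝ) ⊗ₜ[ℤ] (k • y) : ℝ ⊗[ℤ] L) = k • ((1 : ℝ) ⊗ₜ[ℤ] y) :=
    map_zsmul (TensorProduct.mk ℤ ℝ L 1) k y
  rw [h1, Int.cast_smul_eq_zsmul]

lemma tmul_one_injective (L : Type*) [AddCommGroup L] [Module ℤ L]
    [Module.Free ℤ L] (y : L) (h : ((1 : ℝ) ⊗ₜ[ℤ] y : ℝ ⊗[ℤ] L) = 0) : y = 0 := by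
  classical
  let β := Module.Free.chooseBasis ℤ L
  have hc : ∀ i, β.repr y i = 0 := by
    intro i
    have h2 := congrArg (fun z => (β.baseChange ℝ).repr z i) h
    simp only [map_zero, Finsupp.coe_zero, Pi.zero_apply, Module.Basis.baseChange_repr_tmul] at h2
    have h3 : ((β.repr y i : ℤ) : ℝ) = 0 := by simpa [zsmul_eq_mul] using h2
    exact_mod_cast h3
  have : β.repr y = 0 := Finsupp.ext hc
  simpa using congrArg β.repr.symm this

/-- Let `L` be a free `ℤ`-module of finite rank with a `ℤ`-bilinear form `b`.
Suppose (i) `u ∈ L` is primitive: for every `x ∈ L` and `a ∈ ℝ` with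
`x ⊗ 1 = a • (u ⊗ 1)` in `L ⊗ ℝ`, one has `a ∈ ℤ`; and (ii) there exists
`e ∈ L` with `b(u, e) = 0` and `b(v, e) = ±1`.  Then `u` and `v` generate a
primitive sublattice of `L`: for every `x ∈ L` and `a, c ∈ ℝ` with
`x ⊗ 1 = a • (u ⊗ 1) + c • (v ⊗ 1)`, both `a` and `c` are integers and
`x = a • u + c • v` in `L`. -/
theorem stmt_2 (L : Type*) [AddCommGroup L] [Module ℤ L]
    [Module.Free ℤ L] [Module.Finite ℤ L]
    (b : L →ₗ[ℤ] L →ₗ[ℤ] ℤ) (u v : L)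
    (hu : ∀ (x : L) (a : ℝ), ((1 : ℝ) ⊗ₜ[ℤ] x : ℝ ⊗[ℤ] L) = a • ((1 : ℝ) ⊗ₜ[ℤ] u) →
      ∃ n : ℤ, a = (n : ℝ))
    (he : ∃ e : L, b u e = 0 ∧ (b v e = 1 ∨ b v e = -1)) :
    ∀ (x : L) (a c : ℝ),
      ((1 : ℝ) ⊗ₜ[ℤ] x : ℝ ⊗[ℤ] L) = a • ((1 : ℝ) ⊗ₜ[ℤ] u) + c • ((1 : ℝ) ⊗ₜ[ℤ] v) →
      ∃ n k : ℤ, a = (n : ℝ) ∧ c = (k : ℝ) ∧ x = n • u + k • v := by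
  obtain ⟨e, hue, hve⟩ := he
  intro x a c hx
  let f : L →ₗ[ℤ] ℝ := (Int.castAddHom ℝ).toIntLinearMap.comp (b.flip e)
  let φ : ℝ ⊗[ℤ] L →ₗ[ℝ] ℝ := f.liftBaseChange ℝ
  have hφ : ∀ y : L, φ ((1 : ℝ) ⊗ₜ[ℤ] y) = ((b y e : ℤ) : ℝ) := by
    intro y; simp [φ, f]
  have hpair := congrArg φ hx
  rw [map_add, map_smul, map_smul, hφ, hφ, hφ, hue] at hpair
  have hc : ∃ k : ℤ, c = (k : ℝ) := by
    rcases hve with h | h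
    · rw [h] at hpair; norm_num at hpair; exact ⟨b x e, hpair.symm⟩
    · rw [h] at hpair
      simp only [smul_eq_mul, Int.cast_zero, mul_zero, zero_add, Int.cast_neg, Int.cast_one,
        mul_neg_one] at hpair
      exact ⟨-(b x e), by push_cast; linarith⟩
  obtain ⟨k, hk⟩ := hc
  have hxa : ((1 : ℝ) ⊗ₜ[ℤ] (x - k • v) : ℝ ⊗[ℤ] L) = a • ((1 : ℝ) ⊗ₜ[ℤ] u) := by
    rw [TensorProduct.tmul_sub, tmul_int_smul, hx, ← hk, add_sub_cancel_right]
  obtain ⟨n, hn⟩ := hu _ a hxa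
  refine ⟨n, k, hn, hk, ?_⟩
  have hz : ((1 : ℝ) ⊗ₜ[ℤ] (x - (n • u + k • v)) : ℝ ⊗[ℤ] L) = 0 := by
    rw [TensorProduct.tmul_sub, TensorProduct.tmul_add, tmul_int_smul, tmul_int_smul,
      hx, hn, hk, sub_self]
  exact sub_eq_zero.mp (tmul_one_injective L _ hz)
end

section
/- Let V be a finite-dimensional real vector space with a nondegenerate symmetric bilinear form b, let L ⊆ V be a countable subset, and let W ⊆ V be a linear subspace. Let W^⊥ = {γ ∈ V : b(γ, w) = 0 for all w ∈ W}. Then the set {γ ∈ W^⊥ : {ℓ ∈ L : b(γ, ℓ) = 0} = W ∩ L} is dense in W^⊥. -/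
/-- Let `V` be a finite-dimensional real vector space with a nondegenerate
symmetric bilinear form `b`, let `L ⊆ V` be countable and `W ⊆ V` a subspace.
Then the set of `γ ∈ W^⊥` such that `{ℓ ∈ L : b(γ, ℓ) = 0} = W ∩ L` is dense
in `W^⊥ = {γ : b(γ, w) = 0 ∀ w ∈ W}` (for the subspace topology, i.e. `W^⊥`
is contained in the closure of this set). -/
theorem stmt_3 (V : Type*) [NormedAddCommGroup V] [NormedSpace ℝ V]
    [FiniteDimensional ℝ V]
    (b : V →ₗ[ℝ] V →ₗ[ℝ] ℝ)
    (hsymm : ∀ x y, b x y = b y x)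
    (hnd : ∀ x, (∀ y, b x y = 0) → x = 0)
    (L : Set V) (hL : L.Countable) (W : Submodule ℝ V) :
    {γ : V | ∀ w ∈ W, b γ w = 0} ⊆
      closure {γ : V | (∀ w ∈ W, b γ w = 0) ∧
        {ℓ ∈ L | b γ ℓ = 0} = (W : Set V) ∩ L} := by
  have hrefl : b.IsRefl := fun x y h => by rw [hsymm]; exact h
  have hndg : LinearMap.BilinForm.Nondegenerate b :=
    ⟨hnd, fun y hy => hnd y fun x => by rw [hsymm]; exact hy x⟩
  set P : Submodule ℝ V := LinearMap.BilinForm.orthogonal b W with hP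
  have hmemP : ∀ x : V, x ∈ P ↔ ∀ w ∈ W, b x w = 0 := by
    intro x
    constructor
    · intro hx w hw
      rw [hsymm]; exact hx w hw
    · intro hx w hw
      show b w x = 0
      rw [hsymm w x]
      exact hx w hw
  -- index type: elements of L not in W
  set ι := {ℓ : L // (ℓ : V) ∉ W} with hι
  haveI : Countable L := hL.to_subtype
  haveI : Countable ι := Subtype.countable
  -- for each such ℓ, the functional on P
  let f : ι → ↥P →ₗ[ℝ] ℝ := fun ℓ => (b.flip (ℓ : V)) ∘ₗ P.subtype
  have hfcont : ∀ ℓ, Continuous (f ℓ) := fun ℓ => (f ℓ).continuous_of_finiteDimensional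
  -- the open sets
  let U : ι → Set ↥P := fun ℓ => {x | f ℓ x ≠ 0}
  have hUopen : ∀ ℓ, IsOpen (U ℓ) :=
    fun ℓ => isOpen_compl_iff.2 ((isClosed_singleton (x := (0:ℝ))).preimage (hfcont ℓ))
  have hUdense : ∀ ℓ, Dense (U ℓ) := by
    intro ℓ
    have hker : LinearMap.ker (f ℓ) ≠ ⊤ := by
      intro htop
      apply ℓ.2
      have : (ℓ : V) ∈ LinearMap.BilinForm.orthogonal b P := by
        intro x hx
        have : (⟨x, hx⟩ : ↥P) ∈ LinearMap.ker (f ℓ) := htop ▸ Submodule.mem_top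
        have h0 : b x (ℓ : V) = 0 := this
        exact h0
      rwa [hP, LinearMap.BilinForm.orthogonal_orthogonal hndg hrefl] at this
    have hint : interior ((LinearMap.ker (f ℓ) : Set ↥P)) = ∅ := by
      by_contra h
      exact hker (Submodule.eq_top_of_nonempty_interior' _
        (Set.nonempty_iff_ne_empty.2 h))
    have := interior_eq_empty_iff_dense_compl.1 hint
    convert this using 1
    ext x; simp [U]
  -- Baire
  have hdense : Dense (⋂ ℓ, U ℓ) := dense_iInter_of_isOpen hUopen hUdense
  intro γ hγ
  have hγP : γ ∈ P := (hmemP γ).2 hγ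
  have hγcl : (⟨γ, hγP⟩ : ↥P) ∈ closure (⋂ ℓ, U ℓ) := hdense _
  rw [Topology.IsEmbedding.subtypeVal.closure_eq_preimage_closure_image] at hγcl
  refine closure_mono ?_ hγcl
  rintro x ⟨⟨x', hx'P⟩, hx', rfl⟩
  simp only [Set.mem_iInter] at hx'
  refine ⟨(hmemP x').1 hx'P, ?_⟩
  ext ℓ
  constructor
  · rintro ⟨hℓL, hbℓ⟩
    refine ⟨?_, hℓL⟩
    by_contra hℓW
    exact hx' ⟨⟨ℓ, hℓL⟩, hℓW⟩ hbℓ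
  · rintro ⟨hℓW, hℓL⟩
    exact ⟨hℓL, (hmemP x').1 hx'P ℓ hℓW⟩
end

section
/- Let V be a finite-dimensional real vector space with a nondegenerate symmetric bilinear form b, let L ⊆ V be a countable subset, and let W ⊆ V be a linear subspace. Suppose there exists γ₀ ∈ W^⊥ with b(γ₀, γ₀) > 0. Then for every real number c > 0 there exists γ ∈ W^⊥ with b(γ, γ) = c and {ℓ ∈ L : b(γ, ℓ) = 0} = W ∩ L. -/
open MeasureTheory

/-- Let `V` be a finite-dimensional real vector space with a nondegenerate
symmetric bilinear form `b`, let `L ⊆ V` be countable and `W ⊆ V` a subspace.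
If some `γ₀ ∈ W^⊥` satisfies `b(γ₀, γ₀) > 0`, then for every `c > 0` there
exists `γ ∈ W^⊥` with `b(γ, γ) = c` and `{ℓ ∈ L : b(γ, ℓ) = 0} = W ∩ L`. -/
theorem stmt_4 (V : Type*) [AddCommGroup V] [Module ℝ V] [FiniteDimensional ℝ V]
    (b : V →ₗ[ℝ] V →ₗ[ℝ] ℝ)
    (hsymm : ∀ x y, b x y = b y x)
    (hnd : ∀ x, (∀ y, b x y = 0) → x = 0)
    (L : Set V) (hL : L.Countable) (W : Submodule ℝ V)
    (γ₀ : V) (hγ₀ : ∀ w ∈ W, b γ₀ w = 0) (hpos : 0 < b γ₀ γ₀) :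
    ∀ c : ℝ, 0 < c →
      ∃ γ : V, (∀ w ∈ W, b γ w = 0) ∧ b γ γ = c ∧
        {ℓ ∈ L | b γ ℓ = 0} = (W : Set V) ∩ L := by
  intro c hc
  -- set up the orthogonal complement
  set U : Submodule ℝ V := LinearMap.BilinForm.orthogonal b W with hU
  have hmemU : ∀ x : V, x ∈ U ↔ ∀ w ∈ W, b x w = 0 := by
    intro x
    constructor
    · intro hx w hw
      rw [hsymm]
      exact hx w hw
    · intro hx w hw
      rw [hsymm]
      exact hx w hw
  have hnd' : LinearMap.BilinForm.Nondegenerate b := by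
    refine ⟨fun x hx => hnd x hx, fun x hx => hnd x fun y => ?_⟩
    rw [hsymm]; exact hx y
  have hrefl : LinearMap.IsRefl b := by
    intro x y hxy
    rwa [hsymm]
  -- key: if ℓ ∉ W there is u ∈ U with b u ℓ ≠ 0
  have key : ∀ ℓ : V, ℓ ∉ W → ∃ u ∈ U, b u ℓ ≠ 0 := by
    intro ℓ hℓ
    by_contra h
    push_neg at h
    apply hℓ
    rw [← LinearMap.BilinForm.orthogonal_orthogonal hnd' hrefl W]
    intro u hu
    exact h u hu
  -- transfer to Euclidean space
  set n := Module.finrank ℝ U with hn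
  set e : U ≃ₗ[ℝ] (Fin n → ℝ) := (Module.finBasis ℝ U).equivFun with he
  set f : (Fin n → ℝ) →ₗ[ℝ] V := U.subtype ∘ₗ (e.symm : (Fin n → ℝ) →ₗ[ℝ] U) with hf
  set B2 : (Fin n → ℝ) →ₗ[ℝ] (Fin n → ℝ) →ₗ[ℝ] ℝ := b.compl₁₂ f f with hB2
  have hB2apply : ∀ x y, B2 x y = b (f x) (f y) := fun x y => rfl
  -- continuity of the quadratic form
  set Φ : (Fin n → ℝ) →ₗ[ℝ] ((Fin n → ℝ) →L[ℝ] ℝ) :=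
    (LinearMap.toContinuousLinearMap : ((Fin n → ℝ) →ₗ[ℝ] ℝ) ≃ₗ[ℝ] _).toLinearMap ∘ₗ B2 with hΦ
  have hΦcont : Continuous Φ := Φ.continuous_of_finiteDimensional
  have hqcont : Continuous (fun x : Fin n → ℝ => B2 x x) := by
    have : Continuous (fun x : Fin n → ℝ => (Φ x) x) :=
      isBoundedBilinearMap_apply.continuous.comp (hΦcont.prodMk continuous_id)
    exact this
  -- open set of positive vectors
  set S : Set (Fin n → ℝ) := {x | 0 < B2 x x} with hS
  have hSopen : IsOpen S := isOpen_lt continuous_const hqcont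
  have hγ₀U : γ₀ ∈ U := (hmemU γ₀).2 hγ₀
  have hSne : S.Nonempty := by
    refine ⟨e ⟨γ₀, hγ₀U⟩, ?_⟩
    show 0 < b (f _) (f _)
    have : f (e ⟨γ₀, hγ₀U⟩) = γ₀ := by simp [hf]
    rw [this]
    exact hpos
  -- bad sets
  set K : V → Set (Fin n → ℝ) := fun ℓ => {x | b (f x) ℓ = 0} with hK
  have hKzero : ∀ ℓ ∈ L, ℓ ∉ W → volume (K ℓ) = 0 := by
    intro ℓ _ hℓW
    obtain ⟨u, huU, hbu⟩ := key ℓ hℓW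
    set g : (Fin n → ℝ) →ₗ[ℝ] ℝ := (b.flip ℓ) ∘ₗ f with hg
    have hgne : LinearMap.ker g ≠ ⊤ := by
      intro htop
      have : g (e ⟨u, huU⟩) = 0 := by
        rw [← LinearMap.mem_ker, htop]; trivial
      apply hbu
      simpa [hg, hf] using this
    have : K ℓ = (LinearMap.ker g : Set (Fin n → ℝ)) := by
      ext x
      simp [hK, hg, LinearMap.mem_ker]
    rw [this]
    exact Measure.addHaar_submodule _ _ hgne
  -- the union of bad sets has measure zero
  set Lbad : Set V := {ℓ ∈ L | ℓ ∉ W} with hLbad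
  have hLbadc : Lbad.Countable := hL.mono (fun x hx => hx.1)
  have hTzero : volume (⋃ ℓ ∈ Lbad, K ℓ) = 0 := by
    refine measure_biUnion_null_iff hLbadc |>.2 ?_
    intro ℓ hℓ
    exact hKzero ℓ hℓ.1 hℓ.2
  have hSpos : 0 < volume S := hSopen.measure_pos volume hSne
  -- pick a good point
  have : ¬ (S ⊆ ⋃ ℓ ∈ Lbad, K ℓ) := by
    intro hsub
    exact absurd (measure_mono_null hsub hTzero) hSpos.ne'
  obtain ⟨x, hxS, hxK⟩ := Set.not_subset.1 this
  set γ₁ : V := f x with hγ₁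
  have hγ₁U : γ₁ ∈ U := (e.symm x).2
  have hγ₁pos : 0 < b γ₁ γ₁ := hxS
  have hγ₁L : ∀ ℓ ∈ L, ℓ ∉ W → b γ₁ ℓ ≠ 0 := by
    intro ℓ hℓL hℓW hb0
    exact hxK (Set.mem_biUnion ⟨hℓL, hℓW⟩ hb0)
  -- rescale
  set t : ℝ := Real.sqrt (c / b γ₁ γ₁) with ht
  have htpos : 0 < t := Real.sqrt_pos.2 (div_pos hc hγ₁pos)
  refine ⟨t • γ₁, ?_, ?_, ?_⟩
  · intro w hw
    have := (hmemU γ₁).1 hγ₁U w hw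
    simp [this]
  · have : b (t • γ₁) (t • γ₁) = t ^ 2 * b γ₁ γ₁ := by
      simp [_root_.map_smul, LinearMap.smul_apply]
      ring
    rw [this, ht, Real.sq_sqrt (div_pos hc hγ₁pos).le]
    field_simp
  · ext ℓ
    simp only [Set.mem_setOf_eq, Set.mem_inter_iff, SetLike.mem_coe]
    constructor
    · rintro ⟨hℓL, hb0⟩
      refine ⟨?_, hℓL⟩
      by_contra hℓW
      apply hγ₁L ℓ hℓL hℓW
      have : t * b γ₁ ℓ = 0 := by simpa [_root_.map_smul] using hb0
      exact (mul_eq_zero.1 this).resolve_left htpos.ne'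
    · rintro ⟨hℓW, hℓL⟩
      refine ⟨hℓL, ?_⟩
      have := (hmemU γ₁).1 hγ₁U ℓ hℓW
      simp [this]
end

section
/- Let ℂ^× act on (ℂ² ∖ {0}) × ℂ by λ·(z₁, z₂; u) = (λz₁, λz₂; λ⁻²u), and let Q denote the quotient topological space ((ℂ² ∖ {0}) × ℂ)/ℂ^× with the quotient topology. Let Ẑ ⊆ ℂ³ × ℙ²(ℂ) be the set of pairs (x, p) such that for some (equivalently, every) nonzero representative y ∈ ℂ³ of the projective point p, one has y₁y₃ = y₂² and x_i y_j = x_j y_i for all i, j ∈ {1,2,3}, with the subspace topology. Then the map (ℂ² ∖ {0}) × ℂ → Ẑ sending (z₁, z₂; u) to ((u z₁², u z₁z₂, u z₂²), [z₁², z₁z₂, z₂²]) is well defined, descends to Q, and induces a homeomorphism from Q onto Ẑ. -/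
/-- The quotient topology on the complex projective plane
`ℙ²(ℂ) = ℙ ℂ (Fin 3 → ℂ)` (the space of complex lines through `0` in `ℂ³`),
viewed as the quotient of `ℂ³ ∖ {0}` by rescaling. -/
noncomputable instance : TopologicalSpace (Projectivization ℂ (Fin 3 → ℂ)) :=
  instTopologicalSpaceQuotient

/-- The setoid on `(ℂ² ∖ {0}) × ℂ` given by the `ℂ^×`-action
`λ · (z₁, z₂; u) = (λz₁, λz₂; λ⁻²u)`. -/
def blowupSetoid : Setoid ({z : ℂ × ℂ // z ≠ 0} × ℂ) where
  r a b := ∃ l : ℂ, l ≠ 0 ∧ (b.1 : ℂ × ℂ) = l • (a.1 : ℂ × ℂ) ∧ b.2 = (l ^ 2)⁻¹ * a.2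
  iseqv := by
    constructor
    · intro a; exact ⟨1, one_ne_zero, by simp, by simp⟩
    · rintro a b ⟨l, hl, h1, h2⟩
      refine ⟨l⁻¹, inv_ne_zero hl, ?_, ?_⟩
      · rw [h1, smul_smul, inv_mul_cancel₀ hl, one_smul]
      · rw [h2]; field_simp
    · rintro a b c ⟨l, hl, h1, h2⟩ ⟨m, hm, h3, h4⟩
      refine ⟨m * l, mul_ne_zero hm hl, ?_, ?_⟩
      · rw [h3, h1, smul_smul]
      · rw [h4, h2, mul_pow, mul_inv, mul_assoc]

/-- The subset `Ẑ ⊆ ℂ³ × ℙ²(ℂ)` of pairs `(x, p)` such that some (equivalently,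
every) nonzero representative `y` of `p` satisfies `y₁y₃ = y₂²` and
`xᵢyⱼ = xⱼyᵢ` for all `i, j`. -/
def Zhat : Set ((Fin 3 → ℂ) × Projectivization ℂ (Fin 3 → ℂ)) :=
  {p | ∃ (y : Fin 3 → ℂ) (hy : y ≠ 0), p.2 = Projectivization.mk ℂ y hy ∧
    y 0 * y 2 = (y 1) ^ 2 ∧ ∀ i j, p.1 i * y j = p.1 j * y i}

open Topology Filter

namespace Stmt6Aux

abbrev XX : Type := {z : ℂ × ℂ // z ≠ 0} × ℂ

def vec (z : ℂ × ℂ) : Fin 3 → ℂ := ![z.1 ^ 2, z.1 * z.2, z.2 ^ 2]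

lemma vec_ne {z : ℂ × ℂ} (hz : z ≠ 0) : vec z ≠ 0 := by
  intro h
  have h0 := congrFun h 0
  have h2 := congrFun h 2
  simp [vec] at h0 h2
  exact hz (Prod.ext h0 h2)

noncomputable def f (a : XX) : (Fin 3 → ℂ) × Projectivization ℂ (Fin 3 → ℂ) :=
  (a.2 • vec a.1.1, Projectivization.mk ℂ (vec a.1.1) (vec_ne a.1.2))

lemma f_mem (a : XX) : f a ∈ Zhat := by
  refine ⟨vec a.1.1, vec_ne a.1.2, rfl, ?_, ?_⟩
  · show vec a.1.1 0 * vec a.1.1 2 = (vec a.1.1 1) ^ 2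
    simp [vec]; ring
  · intro i j
    show (a.2 • vec a.1.1) i * vec a.1.1 j = (a.2 • vec a.1.1) j * vec a.1.1 i
    simp [Pi.smul_apply, smul_eq_mul]; ring

noncomputable def fZ (a : XX) : Zhat := ⟨f a, f_mem a⟩

lemma vec_smul (l : ℂ) (z : ℂ × ℂ) : vec (l • z) = (l ^ 2) • vec z := by
  funext i
  fin_cases i <;> simp [vec, Prod.smul_fst, Prod.smul_snd, smul_eq_mul] <;> ring

lemma fZ_resp : ∀ a b : XX, blowupSetoid.r a b → fZ a = fZ b := by
  rintro a b ⟨l, hl, h1, h2⟩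
  apply Subtype.ext
  have hv : vec (b.1 : ℂ × ℂ) = (l ^ 2) • vec (a.1 : ℂ × ℂ) := by rw [h1, vec_smul]
  have h5 : b.2 • vec (b.1 : ℂ × ℂ) = a.2 • vec (a.1 : ℂ × ℂ) := by
    rw [hv, h2, smul_smul]
    congr 1
    field_simp
  apply Prod.ext
  · exact h5.symm
  · show Projectivization.mk ℂ (vec ((a.1 : ℂ × ℂ))) _ =
      Projectivization.mk ℂ (vec ((b.1 : ℂ × ℂ))) _
    rw [Projectivization.mk_eq_mk_iff']
    exact ⟨(l ^ 2)⁻¹, by rw [hv, smul_smul, inv_mul_cancel₀ (pow_ne_zero 2 hl), one_smul]⟩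

noncomputable def F : Quotient blowupSetoid → Zhat := Quotient.lift fZ fZ_resp

lemma cont_vec {Y : Type*} [TopologicalSpace Y] {g : Y → ℂ × ℂ} (hg : Continuous g) :
    Continuous fun y => vec (g y) := by
  apply continuous_pi
  intro i
  fin_cases i
  · show Continuous fun y => (g y).1 ^ 2
    fun_prop
  · show Continuous fun y => (g y).1 * (g y).2
    fun_prop
  · show Continuous fun y => (g y).2 ^ 2
    fun_prop

lemma f_cont : Continuous f := by
  apply Continuous.prodMk
  · exact continuous_snd.smul (cont_vec (continuous_subtype_val.comp continuous_fst))
  · show Continuous fun a : XX =>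
      (Quotient.mk'' ⟨vec a.1.1, vec_ne a.1.2⟩ : Projectivization ℂ (Fin 3 → ℂ))
    exact continuous_quotient_mk'.comp
      ((cont_vec (continuous_subtype_val.comp continuous_fst)).subtype_mk _)

lemma F_cont : Continuous F := (f_cont.subtype_mk f_mem).quotient_lift fZ_resp

lemma isOpenMap_mk :
    IsOpenMap (Quotient.mk (projectivizationSetoid ℂ (Fin 3 → ℂ))) := by
  letI : Setoid {v : Fin 3 → ℂ // v ≠ 0} := projectivizationSetoid ℂ (Fin 3 → ℂ)
  intro U hU
  have key : Quotient.mk (projectivizationSetoid ℂ (Fin 3 → ℂ)) ⁻¹'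
      (Quotient.mk (projectivizationSetoid ℂ (Fin 3 → ℂ)) '' U) =
      ⋃ c : ℂˣ, (fun v : {v : Fin 3 → ℂ // v ≠ 0} =>
        (⟨(c : ℂ) • v.1, smul_ne_zero c.ne_zero v.2⟩ : {v : Fin 3 → ℂ // v ≠ 0})) ⁻¹' U := by
    ext v
    simp only [Set.mem_preimage, Set.mem_image, Set.mem_iUnion]
    constructor
    · rintro ⟨w, hw, h⟩
      obtain ⟨c, hc⟩ : ∃ c : ℂˣ, c • v.1 = w.1 := Quotient.exact h
      refine ⟨c, ?_⟩
      rwa [show (⟨(c : ℂ) • v.1, smul_ne_zero c.ne_zero v.2⟩ : {v : Fin 3 → ℂ // v ≠ 0}) = w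
        from Subtype.ext hc]
    · rintro ⟨c, hc⟩
      refine ⟨_, hc, Quotient.sound ?_⟩
      exact ⟨c, rfl⟩
  have hpre : IsOpen (Quotient.mk (projectivizationSetoid ℂ (Fin 3 → ℂ)) ⁻¹'
      (Quotient.mk (projectivizationSetoid ℂ (Fin 3 → ℂ)) '' U)) := by
    rw [key]
    exact isOpen_iUnion fun c =>
      hU.preimage ((continuous_subtype_val.const_smul (c : ℂ)).subtype_mk _)
  exact isQuotientMap_quotient_mk'.isOpen_preimage.mp hpre

noncomputable def ratio (i j : Fin 3) : Projectivization ℂ (Fin 3 → ℂ) → ℂ :=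
  Projectivization.lift (fun v => v.1 i / v.1 j) (by
    rintro ⟨a, ha⟩ ⟨b, hb⟩ t h
    simp only at h
    have ht : t ≠ 0 := by rintro rfl; rw [zero_smul] at h; exact ha h
    simp only [h, Pi.smul_apply, smul_eq_mul]
    rw [mul_div_mul_left _ _ ht])

lemma ratio_mk (i j : Fin 3) (y : Fin 3 → ℂ) (hy : y ≠ 0) :
    ratio i j (Projectivization.mk ℂ y hy) = y i / y j := rfl

lemma ratio_contAt {i j : Fin 3} {y : Fin 3 → ℂ} (hy : y ≠ 0) (hyj : y j ≠ 0) :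
    ContinuousAt (ratio i j) (Projectivization.mk ℂ y hy) := by
  have hmap : 𝓝 (Projectivization.mk ℂ y hy) ≤
      Filter.map (Quotient.mk (projectivizationSetoid ℂ (Fin 3 → ℂ))) (𝓝 ⟨y, hy⟩) :=
    isOpenMap_mk.nhds_le _
  refine Filter.Tendsto.mono_left ?_ hmap
  apply Filter.tendsto_map'_iff.mpr
  show Filter.Tendsto (fun v : {v : Fin 3 → ℂ // v ≠ 0} => v.1 i / v.1 j) _ _
  exact ContinuousAt.div
    (((continuous_apply i).comp continuous_subtype_val).continuousAt)
    (((continuous_apply j).comp continuous_subtype_val).continuousAt) hyj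


lemma mk_eq_of {v w : Fin 3 → ℂ} (hv : v ≠ 0) (hw : w ≠ 0) (a : ℂ) (h : a • w = v) :
    Projectivization.mk ℂ v hv = Projectivization.mk ℂ w hw :=
  (Projectivization.mk_eq_mk_iff' ℂ v w hv hw).mpr ⟨a, h⟩

lemma pair_ne_l (r : ℂ) : ((1 : ℂ), r) ≠ 0 := by
  intro h; exact one_ne_zero (congrArg Prod.fst h)

lemma pair_ne_r (r : ℂ) : (r, (1 : ℂ)) ≠ 0 := by
  intro h; exact one_ne_zero (congrArg Prod.snd h)

noncomputable def s0 (q : Zhat) : XX :=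
  (⟨(1, ratio 1 0 (q : (Fin 3 → ℂ) × Projectivization ℂ (Fin 3 → ℂ)).2), pair_ne_l _⟩,
    (q : (Fin 3 → ℂ) × Projectivization ℂ (Fin 3 → ℂ)).1 0)

noncomputable def s2 (q : Zhat) : XX :=
  (⟨(ratio 1 2 (q : (Fin 3 → ℂ) × Projectivization ℂ (Fin 3 → ℂ)).2, 1), pair_ne_r _⟩,
    (q : (Fin 3 → ℂ) × Projectivization ℂ (Fin 3 → ℂ)).1 2)

lemma key0 (q : Zhat) {y : Fin 3 → ℂ} (hy : y ≠ 0)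
    (hq2 : (q : (Fin 3 → ℂ) × Projectivization ℂ (Fin 3 → ℂ)).2 = Projectivization.mk ℂ y hy)
    (hcond : y 0 * y 2 = (y 1) ^ 2)
    (hcomm : ∀ i j, (q : (Fin 3 → ℂ) × Projectivization ℂ (Fin 3 → ℂ)).1 i * y j =
      (q : (Fin 3 → ℂ) × Projectivization ℂ (Fin 3 → ℂ)).1 j * y i)
    (hy0 : y 0 ≠ 0) : fZ (s0 q) = q := by
  set x := (q : (Fin 3 → ℂ) × Projectivization ℂ (Fin 3 → ℂ)).1 with hx
  have hr : ratio 1 0 (q : (Fin 3 → ℂ) × Projectivization ℂ (Fin 3 → ℂ)).2 = y 1 / y 0 := by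
    rw [hq2, ratio_mk]
  apply Subtype.ext
  apply Prod.ext
  · show x 0 • vec (1, ratio 1 0 (q : (Fin 3 → ℂ) × Projectivization ℂ (Fin 3 → ℂ)).2) = x
    funext i
    fin_cases i
    · show x 0 * (1 : ℂ) ^ 2 = x 0
      ring
    · show x 0 * ((1 : ℂ) * ratio 1 0 (q : (Fin 3 → ℂ) × Projectivization ℂ (Fin 3 → ℂ)).2) = x 1
      rw [hr]
      field_simp
      linear_combination hcomm 0 1
    · show x 0 * (ratio 1 0 (q : (Fin 3 → ℂ) × Projectivization ℂ (Fin 3 → ℂ)).2) ^ 2 = x 2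
      rw [hr]
      field_simp
      linear_combination y 0 * hcomm 0 2 - x 0 * hcond
  · show Projectivization.mk ℂ
      (vec (1, ratio 1 0 (q : (Fin 3 → ℂ) × Projectivization ℂ (Fin 3 → ℂ)).2)) _ = _
    refine Eq.trans (mk_eq_of _ hy ((y 0)⁻¹) ?_) hq2.symm
    funext i
    fin_cases i
    · show (y 0)⁻¹ * y 0 = (1 : ℂ) ^ 2
      field_simp
    · show (y 0)⁻¹ * y 1 = (1 : ℂ) * ratio 1 0 (q : (Fin 3 → ℂ) × Projectivization ℂ (Fin 3 → ℂ)).2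
      rw [hr]
      field_simp
    · show (y 0)⁻¹ * y 2 = (ratio 1 0 (q : (Fin 3 → ℂ) × Projectivization ℂ (Fin 3 → ℂ)).2) ^ 2
      rw [hr]
      field_simp
      linear_combination hcond

lemma key2 (q : Zhat) {y : Fin 3 → ℂ} (hy : y ≠ 0)
    (hq2 : (q : (Fin 3 → ℂ) × Projectivization ℂ (Fin 3 → ℂ)).2 = Projectivization.mk ℂ y hy)
    (hcond : y 0 * y 2 = (y 1) ^ 2)
    (hcomm : ∀ i j, (q : (Fin 3 → ℂ) × Projectivization ℂ (Fin 3 → ℂ)).1 i * y j =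
      (q : (Fin 3 → ℂ) × Projectivization ℂ (Fin 3 → ℂ)).1 j * y i)
    (hy2 : y 2 ≠ 0) : fZ (s2 q) = q := by
  set x := (q : (Fin 3 → ℂ) × Projectivization ℂ (Fin 3 → ℂ)).1 with hx
  have hr : ratio 1 2 (q : (Fin 3 → ℂ) × Projectivization ℂ (Fin 3 → ℂ)).2 = y 1 / y 2 := by
    rw [hq2, ratio_mk]
  apply Subtype.ext
  apply Prod.ext
  · show x 2 • vec (ratio 1 2 (q : (Fin 3 → ℂ) × Projectivization ℂ (Fin 3 → ℂ)).2, 1) = x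
    funext i
    fin_cases i
    · show x 2 * (ratio 1 2 (q : (Fin 3 → ℂ) × Projectivization ℂ (Fin 3 → ℂ)).2) ^ 2 = x 0
      rw [hr]
      field_simp
      linear_combination (-(x 2)) * hcond - y 2 * hcomm 0 2
    · show x 2 * (ratio 1 2 (q : (Fin 3 → ℂ) × Projectivization ℂ (Fin 3 → ℂ)).2 * 1) = x 1
      rw [hr]
      field_simp
      linear_combination -hcomm 1 2
    · show x 2 * (1 : ℂ) ^ 2 = x 2
      ring
  · show Projectivization.mk ℂ
      (vec (ratio 1 2 (q : (Fin 3 → ℂ) × Projectivization ℂ (Fin 3 → ℂ)).2, 1)) _ = _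
    refine Eq.trans (mk_eq_of _ hy ((y 2)⁻¹) ?_) hq2.symm
    funext i
    fin_cases i
    · show (y 2)⁻¹ * y 0 = (ratio 1 2 (q : (Fin 3 → ℂ) × Projectivization ℂ (Fin 3 → ℂ)).2) ^ 2
      rw [hr]
      field_simp
      linear_combination hcond
    · show (y 2)⁻¹ * y 1 = ratio 1 2 (q : (Fin 3 → ℂ) × Projectivization ℂ (Fin 3 → ℂ)).2 * 1
      rw [hr]
      field_simp
    · show (y 2)⁻¹ * y 2 = (1 : ℂ) ^ 2
      field_simp

lemma cover (q : Zhat) : ∃ (y : Fin 3 → ℂ) (hy : y ≠ 0),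
    (q : (Fin 3 → ℂ) × Projectivization ℂ (Fin 3 → ℂ)).2 = Projectivization.mk ℂ y hy ∧
    y 0 * y 2 = (y 1) ^ 2 ∧
    (∀ i j, (q : (Fin 3 → ℂ) × Projectivization ℂ (Fin 3 → ℂ)).1 i * y j =
      (q : (Fin 3 → ℂ) × Projectivization ℂ (Fin 3 → ℂ)).1 j * y i) ∧
    (y 0 ≠ 0 ∨ y 2 ≠ 0) := by
  obtain ⟨y, hy, h2, hc, hcm⟩ := q.2
  refine ⟨y, hy, h2, hc, hcm, ?_⟩
  by_contra h
  push_neg at h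
  obtain ⟨h0, h2'⟩ := h
  have h1 : y 1 = 0 := by
    have : (y 1) ^ 2 = 0 := by rw [← hc, h0]; ring
    exact pow_eq_zero_iff (by norm_num) |>.mp this
  exact hy (funext fun i => by fin_cases i <;> assumption)
lemma F_inj : Function.Injective F := by
  intro qa qb
  refine Quotient.inductionOn₂ qa qb ?_
  intro a b h
  apply Quotient.sound
  have hh : f a = f b := congrArg Subtype.val h
  have h1 : a.2 • vec ((a.1 : ℂ × ℂ)) = b.2 • vec ((b.1 : ℂ × ℂ)) := congrArg Prod.fst hh
  have h2 : Projectivization.mk ℂ (vec ((a.1 : ℂ × ℂ))) (vec_ne a.1.2) =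
      Projectivization.mk ℂ (vec ((b.1 : ℂ × ℂ))) (vec_ne b.1.2) := congrArg Prod.snd hh
  rw [Projectivization.mk_eq_mk_iff'] at h2
  obtain ⟨c, hc⟩ := h2
  set z := (a.1 : ℂ × ℂ) with hz
  set w := (b.1 : ℂ × ℂ) with hw
  have e0 : z.1 ^ 2 = c * w.1 ^ 2 := by
    have h' := congrFun hc 0
    simp only [vec, Pi.smul_apply, smul_eq_mul, Matrix.cons_val_zero] at h'
    exact h'.symm
  have e1 : z.1 * z.2 = c * (w.1 * w.2) := by
    have h' := congrFun hc 1
    simp only [vec, Pi.smul_apply, smul_eq_mul, Matrix.cons_val_one, Matrix.head_cons] at h'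
    exact h'.symm
  have e2 : z.2 ^ 2 = c * w.2 ^ 2 := by
    have h' := congrFun hc 2
    simp only [vec, Pi.smul_apply, smul_eq_mul] at h'
    have h'' : c * w.2 ^ 2 = z.2 ^ 2 := by
      simpa [vec, Matrix.cons_val_two, Matrix.tail_cons] using h'
    exact h''.symm
  have g0 : a.2 * z.1 ^ 2 = b.2 * w.1 ^ 2 := by
    have h' := congrFun h1 0
    simpa only [vec, Pi.smul_apply, smul_eq_mul, Matrix.cons_val_zero] using h'
  have g2 : a.2 * z.2 ^ 2 = b.2 * w.2 ^ 2 := by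
    have h' := congrFun h1 2
    simpa [vec, Matrix.cons_val_two, Matrix.tail_cons] using h'
  have hcne : c ≠ 0 := by
    rintro rfl
    rw [zero_smul] at hc
    exact vec_ne a.1.2 hc.symm
  by_cases hz1 : z.1 = 0
  · have hz2 : z.2 ≠ 0 := fun h0 => a.1.2 (Prod.ext hz1 h0)
    have hw1 : w.1 = 0 := by
      have : c * w.1 ^ 2 = 0 := by rw [← e0, hz1]; ring
      rcases mul_eq_zero.mp this with h' | h'
      · exact absurd h' hcne
      · exact pow_eq_zero_iff (n := 2) (by norm_num) |>.mp h'
    have hw2 : w.2 ≠ 0 := fun h0 => b.1.2 (Prod.ext hw1 h0)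
    refine ⟨w.2 / z.2, div_ne_zero hw2 hz2, ?_, ?_⟩
    · apply Prod.ext
      · show w.1 = (w.2 / z.2) • z.1
        rw [smul_eq_mul, hw1, hz1]; ring
      · show w.2 = (w.2 / z.2) • z.2
        rw [smul_eq_mul]; field_simp
    · show b.2 = ((w.2 / z.2) ^ 2)⁻¹ * a.2
      field_simp
      linear_combination -g2
  · have hw1 : w.1 ≠ 0 := by
      intro h0
      apply hz1
      have : z.1 ^ 2 = 0 := by rw [e0, h0]; ring
      exact pow_eq_zero_iff (n := 2) (by norm_num) |>.mp this
    refine ⟨w.1 / z.1, div_ne_zero hw1 hz1, ?_, ?_⟩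
    · apply Prod.ext
      · show w.1 = (w.1 / z.1) • z.1
        rw [smul_eq_mul]; field_simp
      · show w.2 = (w.1 / z.1) • z.2
        rw [smul_eq_mul]
        have h9 : w.1 * z.1 * (w.2 * z.1 - w.1 * z.2) = 0 := by
          linear_combination w.1 * w.2 * e0 - w.1 ^ 2 * e1
        rcases mul_eq_zero.mp h9 with h' | h'
        · exact absurd h' (mul_ne_zero hw1 hz1)
        · have h10 : w.2 * z.1 = w.1 * z.2 := by linear_combination h'
          field_simp
          linear_combination h10
    · show b.2 = ((w.1 / z.1) ^ 2)⁻¹ * a.2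
      field_simp
      linear_combination -g0

lemma F_surj : Function.Surjective F := by
  intro q
  obtain ⟨y, hy, h2, hcond, hcomm, h02⟩ := cover q
  rcases h02 with h0 | h2'
  · exact ⟨Quotient.mk blowupSetoid (s0 q), key0 q hy h2 hcond hcomm h0⟩
  · exact ⟨Quotient.mk blowupSetoid (s2 q), key2 q hy h2 hcond hcomm h2'⟩

noncomputable def E : Quotient blowupSetoid ≃ Zhat := Equiv.ofBijective F ⟨F_inj, F_surj⟩
def U0 : Set Zhat :=
  (fun q : Zhat => (q : (Fin 3 → ℂ) × Projectivization ℂ (Fin 3 → ℂ)).2) ⁻¹'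
    (Quotient.mk (projectivizationSetoid ℂ (Fin 3 → ℂ)) ''
      {v : {v : Fin 3 → ℂ // v ≠ 0} | v.1 0 ≠ 0})

def U2 : Set Zhat :=
  (fun q : Zhat => (q : (Fin 3 → ℂ) × Projectivization ℂ (Fin 3 → ℂ)).2) ⁻¹'
    (Quotient.mk (projectivizationSetoid ℂ (Fin 3 → ℂ)) ''
      {v : {v : Fin 3 → ℂ // v ≠ 0} | v.1 2 ≠ 0})

lemma U0_open : IsOpen U0 := by
  apply IsOpen.preimage (continuous_snd.comp continuous_subtype_val)
  apply isOpenMap_mk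
  exact isOpen_ne.preimage ((continuous_apply 0).comp continuous_subtype_val)

lemma U2_open : IsOpen U2 := by
  apply IsOpen.preimage (continuous_snd.comp continuous_subtype_val)
  apply isOpenMap_mk
  exact isOpen_ne.preimage ((continuous_apply 2).comp continuous_subtype_val)

lemma hit0 {q : Zhat} (hq : q ∈ U0) :
    ∃ (y : Fin 3 → ℂ) (hy : y ≠ 0),
      (q : (Fin 3 → ℂ) × Projectivization ℂ (Fin 3 → ℂ)).2 = Projectivization.mk ℂ y hy ∧
      y 0 * y 2 = (y 1) ^ 2 ∧
      (∀ i j, (q : (Fin 3 → ℂ) × Projectivization ℂ (Fin 3 → ℂ)).1 i * y j =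
        (q : (Fin 3 → ℂ) × Projectivization ℂ (Fin 3 → ℂ)).1 j * y i) ∧ y 0 ≠ 0 := by
  obtain ⟨y, hy, h2, hcond, hcomm, _⟩ := cover q
  obtain ⟨w, hw0, hwmk⟩ := hq
  have hwmk' : Projectivization.mk ℂ w.1 w.2 =
      (q : (Fin 3 → ℂ) × Projectivization ℂ (Fin 3 → ℂ)).2 := hwmk
  have hmm : Projectivization.mk ℂ y hy = Projectivization.mk ℂ w.1 w.2 :=
    h2.symm.trans hwmk'.symm
  rw [Projectivization.mk_eq_mk_iff'] at hmm
  obtain ⟨a, ha⟩ := hmm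
  have ha0 : a ≠ 0 := by rintro rfl; rw [zero_smul] at ha; exact hy ha.symm
  have hy0 : y 0 ≠ 0 := by
    rw [← ha]
    simp only [Pi.smul_apply, smul_eq_mul]
    exact mul_ne_zero ha0 hw0
  exact ⟨y, hy, h2, hcond, hcomm, hy0⟩

lemma hit2 {q : Zhat} (hq : q ∈ U2) :
    ∃ (y : Fin 3 → ℂ) (hy : y ≠ 0),
      (q : (Fin 3 → ℂ) × Projectivization ℂ (Fin 3 → ℂ)).2 = Projectivization.mk ℂ y hy ∧
      y 0 * y 2 = (y 1) ^ 2 ∧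
      (∀ i j, (q : (Fin 3 → ℂ) × Projectivization ℂ (Fin 3 → ℂ)).1 i * y j =
        (q : (Fin 3 → ℂ) × Projectivization ℂ (Fin 3 → ℂ)).1 j * y i) ∧ y 2 ≠ 0 := by
  obtain ⟨y, hy, h2, hcond, hcomm, _⟩ := cover q
  obtain ⟨w, hw0, hwmk⟩ := hq
  have hwmk' : Projectivization.mk ℂ w.1 w.2 =
      (q : (Fin 3 → ℂ) × Projectivization ℂ (Fin 3 → ℂ)).2 := hwmk
  have hmm : Projectivization.mk ℂ y hy = Projectivization.mk ℂ w.1 w.2 :=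
    h2.symm.trans hwmk'.symm
  rw [Projectivization.mk_eq_mk_iff'] at hmm
  obtain ⟨a, ha⟩ := hmm
  have ha0 : a ≠ 0 := by rintro rfl; rw [zero_smul] at ha; exact hy ha.symm
  have hy2 : y 2 ≠ 0 := by
    rw [← ha]
    simp only [Pi.smul_apply, smul_eq_mul]
    exact mul_ne_zero ha0 hw0
  exact ⟨y, hy, h2, hcond, hcomm, hy2⟩

lemma symm_eq0 {q : Zhat} (hq : q ∈ U0) : E.symm q = Quotient.mk blowupSetoid (s0 q) := by
  obtain ⟨y, hy, h2, hcond, hcomm, hy0⟩ := hit0 hq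
  rw [Equiv.symm_apply_eq]
  exact (key0 q hy h2 hcond hcomm hy0).symm

lemma symm_eq2 {q : Zhat} (hq : q ∈ U2) : E.symm q = Quotient.mk blowupSetoid (s2 q) := by
  obtain ⟨y, hy, h2, hcond, hcomm, hy2⟩ := hit2 hq
  rw [Equiv.symm_apply_eq]
  exact (key2 q hy h2 hcond hcomm hy2).symm

lemma E_symm_cont : Continuous E.symm := by
  rw [continuous_iff_continuousAt]
  intro q
  letI : Setoid ({z : ℂ × ℂ // z ≠ 0} × ℂ) := blowupSetoid
  have hmkc : Continuous (Quotient.mk blowupSetoid : XX → Quotient blowupSetoid) :=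
    continuous_quotient_mk'
  obtain ⟨y, hy, h2, hcond, hcomm, h02⟩ := cover q
  rcases h02 with hy0 | hy2
  · have hqU : q ∈ U0 := ⟨⟨y, hy⟩, hy0, by
      show Projectivization.mk ℂ y hy =
        (q : (Fin 3 → ℂ) × Projectivization ℂ (Fin 3 → ℂ)).2
      exact h2.symm⟩
    have hs0 : ContinuousAt s0 q := by
      apply ContinuousAt.prodMk
      · apply Topology.IsInducing.subtypeVal.continuousAt_iff.mpr
        show ContinuousAt (fun q' : Zhat =>
          ((1 : ℂ), ratio 1 0 (q' : (Fin 3 → ℂ) × Projectivization ℂ (Fin 3 → ℂ)).2)) q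
        apply ContinuousAt.prodMk continuousAt_const
        have hrat : ContinuousAt (ratio 1 0)
            ((q : (Fin 3 → ℂ) × Projectivization ℂ (Fin 3 → ℂ)).2) := by
          rw [h2]; exact ratio_contAt hy hy0
        exact ContinuousAt.comp
          (f := fun q' : Zhat => (q' : (Fin 3 → ℂ) × Projectivization ℂ (Fin 3 → ℂ)).2)
          hrat ((continuous_snd.comp continuous_subtype_val).continuousAt)
      · exact ((continuous_apply 0).comp
          (continuous_fst.comp continuous_subtype_val)).continuousAt
    have hca : ContinuousAt (fun q' => Quotient.mk blowupSetoid (s0 q')) q :=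
      hmkc.continuousAt.comp hs0
    apply hca.congr
    exact Filter.eventuallyEq_of_mem (U0_open.mem_nhds hqU) fun q' hq' => (symm_eq0 hq').symm
  · have hqU : q ∈ U2 := ⟨⟨y, hy⟩, hy2, by
      show Projectivization.mk ℂ y hy =
        (q : (Fin 3 → ℂ) × Projectivization ℂ (Fin 3 → ℂ)).2
      exact h2.symm⟩
    have hs2 : ContinuousAt s2 q := by
      apply ContinuousAt.prodMk
      · apply Topology.IsInducing.subtypeVal.continuousAt_iff.mpr
        show ContinuousAt (fun q' : Zhat =>
          (ratio 1 2 (q' : (Fin 3 → ℂ) × Projectivization ℂ (Fin 3 → ℂ)).2, (1 : ℂ))) q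
        refine ContinuousAt.prodMk ?_ continuousAt_const
        have hrat : ContinuousAt (ratio 1 2)
            ((q : (Fin 3 → ℂ) × Projectivization ℂ (Fin 3 → ℂ)).2) := by
          rw [h2]; exact ratio_contAt hy hy2
        exact ContinuousAt.comp
          (f := fun q' : Zhat => (q' : (Fin 3 → ℂ) × Projectivization ℂ (Fin 3 → ℂ)).2)
          hrat ((continuous_snd.comp continuous_subtype_val).continuousAt)
      · exact ((continuous_apply 2).comp
          (continuous_fst.comp continuous_subtype_val)).continuousAt
    have hca : ContinuousAt (fun q' => Quotient.mk blowupSetoid (s2 q')) q :=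
      hmkc.continuousAt.comp hs2
    apply hca.congr
    exact Filter.eventuallyEq_of_mem (U2_open.mem_nhds hqU) fun q' hq' => (symm_eq2 hq').symm

noncomputable def EH : Quotient blowupSetoid ≃ₜ Zhat where
  toEquiv := E
  continuous_toFun := F_cont
  continuous_invFun := E_symm_cont

end Stmt6Aux

/-- The map `(ℂ² ∖ {0}) × ℂ → Ẑ` sending `(z₁, z₂; u)` to
`((uz₁², uz₁z₂, uz₂²), [z₁², z₁z₂, z₂²])` descends to the quotient
`Q = ((ℂ² ∖ {0}) × ℂ)/ℂ^×` and induces a homeomorphism from `Q` onto `Ẑ`. -/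
theorem stmt_6 :
    ∃ h : Quotient blowupSetoid ≃ₜ Zhat,
      ∀ (z : ℂ × ℂ) (hz : z ≠ 0) (u : ℂ)
        (hv : ![z.1 ^ 2, z.1 * z.2, z.2 ^ 2] ≠ 0),
        ((h (Quotient.mk blowupSetoid (⟨z, hz⟩, u)) :
            (Fin 3 → ℂ) × Projectivization ℂ (Fin 3 → ℂ))) =
          (![u * z.1 ^ 2, u * (z.1 * z.2), u * z.2 ^ 2],
            Projectivization.mk ℂ ![z.1 ^ 2, z.1 * z.2, z.2 ^ 2] hv) := by
  refine ⟨Stmt6Aux.EH, ?_⟩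
  intro z hz u hv
  show (Stmt6Aux.f (⟨z, hz⟩, u)) = _
  apply Prod.ext
  · show u • Stmt6Aux.vec z = ![u * z.1 ^ 2, u * (z.1 * z.2), u * z.2 ^ 2]
    funext i
    fin_cases i <;> rfl
  · rfl
end

section
/- Fix ε > 0, and set A' = {(z₁, z₂) ∈ ℂ² : z₁ ≠ 0 and |z₂|·(1 + |z₁|²) < ε}. Define τ(z₁, z₂) = (z₁⁻¹, z₁²z₂). Then τ maps A' bijectively onto A', τ ∘ τ is the identity on A', and τ is holomorphic on A'. -/
/-- Fix `ε > 0` and let `A' = {(z₁, z₂) ∈ ℂ² : z₁ ≠ 0 ∧ |z₂|(1 + |z₁|²) < ε}`.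
The map `τ(z₁, z₂) = (z₁⁻¹, z₁² z₂)` maps `A'` bijectively onto `A'`, is an
involution on `A'`, and is holomorphic on `A'`. -/
theorem stmt_10 (ε : ℝ) (hε : 0 < ε)
    (A' : Set (ℂ × ℂ))
    (hA' : A' = {z : ℂ × ℂ | z.1 ≠ 0 ∧ ‖z.2‖ * (1 + ‖z.1‖ ^ 2) < ε})
    (τ : ℂ × ℂ → ℂ × ℂ) (hτ : τ = fun z => (z.1⁻¹, z.1 ^ 2 * z.2)) :
    Set.BijOn τ A' A' ∧ (∀ z ∈ A', τ (τ z) = z) ∧ DifferentiableOn ℂ τ A' := by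
  subst hA' hτ
  have hmaps : Set.MapsTo (fun z : ℂ × ℂ => (z.1⁻¹, z.1 ^ 2 * z.2))
      {z : ℂ × ℂ | z.1 ≠ 0 ∧ ‖z.2‖ * (1 + ‖z.1‖ ^ 2) < ε}
      {z : ℂ × ℂ | z.1 ≠ 0 ∧ ‖z.2‖ * (1 + ‖z.1‖ ^ 2) < ε} := by
    rintro ⟨z1, z2⟩ ⟨h1, h2⟩
    simp only [Set.mem_setOf_eq] at *
    refine ⟨inv_ne_zero h1, ?_⟩
    have ha1 : ‖z1‖ ≠ 0 := by simpa using h1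
    calc ‖z1 ^ 2 * z2‖ * (1 + ‖z1⁻¹‖ ^ 2)
        = ‖z2‖ * (‖z1‖ ^ 2 * (1 + (‖z1‖)⁻¹ ^ 2)) := by
          simp [norm_mul, norm_pow, norm_inv]; ring
      _ = ‖z2‖ * (‖z1‖ ^ 2 + 1) := by
          field_simp
      _ < ε := by rw [add_comm]; exact h2
  have hinv : ∀ z ∈ {z : ℂ × ℂ | z.1 ≠ 0 ∧ ‖z.2‖ * (1 + ‖z.1‖ ^ 2) < ε},
      (fun z : ℂ × ℂ => (z.1⁻¹, z.1 ^ 2 * z.2)) ((fun z : ℂ × ℂ => (z.1⁻¹, z.1 ^ 2 * z.2)) z) = z := by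
    rintro ⟨z1, z2⟩ ⟨h1, _⟩
    simp only
    field_simp
  refine ⟨⟨hmaps, ?_, ?_⟩, hinv, ?_⟩
  · intro x hx y hy hxy
    have : (fun z : ℂ × ℂ => (z.1⁻¹, z.1 ^ 2 * z.2)) ((fun z : ℂ × ℂ => (z.1⁻¹, z.1 ^ 2 * z.2)) x) = (fun z : ℂ × ℂ => (z.1⁻¹, z.1 ^ 2 * z.2)) ((fun z : ℂ × ℂ => (z.1⁻¹, z.1 ^ 2 * z.2)) y) := congrArg (fun z : ℂ × ℂ => (z.1⁻¹, z.1 ^ 2 * z.2)) hxy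
    rw [hinv x hx, hinv y hy] at this
    exact this
  · intro y hy
    exact ⟨_, hmaps hy, hinv y hy⟩
  · intro z hz
    have h1 : z.1 ≠ 0 := hz.1
    apply DifferentiableAt.differentiableWithinAt
    exact DifferentiableAt.prodMk
      ((differentiable_fst.differentiableAt).inv h1)
      (((differentiable_fst.differentiableAt).pow 2).mul differentiable_snd.differentiableAt)
end
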